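/- Let R be a division ring and a₁₁,…,a₁ₙ, a₂₂,…,a₂ₙ,…,aₙₙ elements of R. The quasideterminant |A|₁ₙ of the almost-triangular n×n matrix A with aᵢⱼ for i ≤ j, -1 in positions (i+1, i), and 0 below the subdiagonal, equals the polynomial a₁ₙ + Σ_{1 ≤ j₁ < j₂ < ⋯ < jₖ < n} a_{1,j₁} a_{j₁+1, j₂} a_{j₂+1, j₃} ⋯ a_{jₖ+1, n}. -/

import Mathlib

/-- Product along a chain: `chainProd a N i [j₁, …, jₖ] = a i j₁ * a (j₁+1) j₂ * ⋯
* a (jₖ+1) N`, with `chainProd a N i [] = a i N`. -/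
def chainProd {R : Type*} [Ring R] (a : ℕ → ℕ → R) (N : ℕ) : ℕ → List ℕ → R
  | i, [] => a i N
  | i, j :: l => a i j * chainProd a N (j + 1) l

open Finset

section Aux
variable {R : Type*} [Ring R] (a : ℕ → ℕ → R)

lemma chainProd_append (t m : ℕ) (l : List ℕ) : ∀ s : ℕ,
    chainProd a t s (l ++ [m]) = chainProd a m s l * a (m + 1) t := by
  induction l with
  | nil => intro s; simp [chainProd]
  | cons j l ih => intro s; simp [chainProd, ih, mul_assoc]

lemma sort_insert_top {m : ℕ} {S : Finset ℕ} (h : ∀ x ∈ S, x < m) :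
    Finset.sort (insert m S) (· ≤ ·) = Finset.sort S (· ≤ ·) ++ [m] := by
  have hm : m ∉ S := fun hm => lt_irrefl m (h m hm)
  have hperm : List.Perm (Finset.sort (insert m S) (· ≤ ·)) (Finset.sort S (· ≤ ·) ++ [m]) := by
    refine (Finset.sort_perm_toList _ _).trans ?_
    refine (Finset.toList_insert hm).trans ?_
    exact ((Finset.sort_perm_toList S (· ≤ ·)).symm.cons m).trans
      (List.perm_append_singleton m _).symm
  have hs2 : List.Pairwise (· ≤ ·) (Finset.sort S (· ≤ ·) ++ [m]) := by
    rw [List.pairwise_append]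
    refine ⟨Finset.pairwise_sort _ _, List.pairwise_singleton _ m, ?_⟩
    intro x hx b hb
    rw [List.mem_singleton] at hb
    subst hb
    exact le_of_lt (h x ((Finset.mem_sort _).1 hx))
  exact List.Perm.eq_of_pairwise' (Finset.pairwise_sort _ _) hs2 hperm

lemma split_min (F : Finset ℕ → R) (t : ℕ) : ∀ s, ∑ S ∈ (Ico s t).powerset, F S =
    F ∅ + ∑ j ∈ Ico s t, ∑ S ∈ (Ico (j + 1) t).powerset, F (insert j S) := by
  suffices H : ∀ k s, t - s = k → ∑ S ∈ (Ico s t).powerset, F S =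
      F ∅ + ∑ j ∈ Ico s t, ∑ S ∈ (Ico (j + 1) t).powerset, F (insert j S) by
    exact fun s => H (t - s) s rfl
  intro k
  induction k with
  | zero =>
    intro s hk
    have : Ico s t = ∅ := Ico_eq_empty (by omega)
    simp [this]
  | succ k ih =>
    intro s hk
    have hst : s < t := by omega
    have hne : s ∉ Ico (s + 1) t := by simp
    have hins : Ico s t = insert s (Ico (s + 1) t) := by
      rw [Finset.insert_Ico_add_one_left_eq_Ico hst]
    rw [hins, Finset.sum_powerset_insert hne, ih (s + 1) (by omega),
      Finset.sum_insert hne]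
    abel

lemma split_max (F : Finset ℕ → R) (s : ℕ) : ∀ t, ∑ S ∈ (Ico s t).powerset, F S =
    F ∅ + ∑ m ∈ Ico s t, ∑ S ∈ (Ico s m).powerset, F (insert m S) := by
  intro t
  induction t with
  | zero => simp
  | succ t ih =>
    by_cases h : s ≤ t
    · have hne : t ∉ Ico s t := by simp
      rw [Nat.Ico_succ_right_eq_insert_Ico h, Finset.sum_powerset_insert hne, ih,
        Finset.sum_insert hne]
      abel
    · have : Ico s (t + 1) = ∅ := Ico_eq_empty (by omega)
      simp [this]

def psum (s t : ℕ) : R := ∑ S ∈ (Ico s t).powerset, chainProd a t s (Finset.sort S (· ≤ ·))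

lemma psum_min (s t : ℕ) :
    psum a s t = a s t + ∑ j ∈ Ico s t, a s j * psum a (j + 1) t := by
  rw [psum, split_min]
  congr 1
  · simp [chainProd]
  refine sum_congr rfl fun j hj => ?_
  rw [psum, mul_sum]
  refine sum_congr rfl fun S hS => ?_
  rw [mem_powerset] at hS
  have h1 : ∀ b ∈ S, j ≤ b := fun b hb => by
    have := mem_Ico.1 (hS hb); omega
  have h2 : j ∉ S := fun hj2 => by have := mem_Ico.1 (hS hj2); omega
  rw [Finset.sort_insert (· ≤ ·) h1 h2]
  rfl

lemma psum_max (s t : ℕ) :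
    psum a s t = a s t + ∑ m ∈ Ico s t, psum a s m * a (m + 1) t := by
  rw [psum, split_max]
  congr 1
  · simp [chainProd]
  refine sum_congr rfl fun m hm => ?_
  rw [psum, sum_mul]
  refine sum_congr rfl fun S hS => ?_
  rw [mem_powerset] at hS
  have h1 : ∀ x ∈ S, x < m := fun x hx => (mem_Ico.1 (hS hx)).2
  rw [sort_insert_top h1, chainProd_append]

end Aux


section Main
variable {R : Type*} [Ring R]

lemma key_sum (a : ℕ → ℕ → R) {n : ℕ} (j i : ℕ) (hj : j < n) (hi : i < n) :
    ∑ k ∈ range n, (if j < k then a (j + 2) (k + 1) else if j = k then (-1 : R) else 0) *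
      (if k = i then (-1 : R) else if k < i then -psum a (k + 2) (i + 1) else 0)
    = if j = i then 1 else 0 := by
  rcases lt_trichotomy j i with hij | rfl | hij
  · rw [if_neg (by omega)]
    have hsub : Ico j (i + 1) ⊆ range n := fun k hk => mem_range.2 (by
      have := mem_Ico.1 hk; omega)
    have hz : ∀ k ∈ range n, k ∉ Ico j (i + 1) →
        (if j < k then a (j + 2) (k + 1) else if j = k then (-1 : R) else 0) *
        (if k = i then (-1 : R) else if k < i then -psum a (k + 2) (i + 1) else 0) = 0 := by
      intro k _ hk
      rw [mem_Ico] at hk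
      split_ifs <;> first | (exfalso; omega) | noncomm_ring
    rw [← Finset.sum_subset hsub hz,
      Finset.sum_eq_sum_Ico_succ_bot (show j < i + 1 by omega),
      Finset.sum_Ico_succ_top (show j + 1 ≤ i by omega)]
    have hfj : (if j < j then a (j + 2) (j + 1) else if j = j then (-1 : R) else 0) *
        (if j = i then (-1 : R) else if j < i then -psum a (j + 2) (i + 1) else 0)
        = psum a (j + 2) (i + 1) := by
      rw [if_neg (lt_irrefl j), if_pos rfl, if_neg (by omega : ¬ j = i), if_pos hij]; noncomm_ring
    have hfi : (if j < i then a (j + 2) (i + 1) else if j = i then (-1 : R) else 0) *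
        (if i = i then (-1 : R) else if i < i then -psum a (i + 2) (i + 1) else 0)
        = -a (j + 2) (i + 1) := by
      rw [if_pos hij, if_pos rfl]; noncomm_ring
    have hmid : ∑ k ∈ Ico (j + 1) i,
        (if j < k then a (j + 2) (k + 1) else if j = k then (-1 : R) else 0) *
        (if k = i then (-1 : R) else if k < i then -psum a (k + 2) (i + 1) else 0)
        = ∑ k ∈ Ico (j + 1) i, -(a (j + 2) (k + 1) * psum a (k + 2) (i + 1)) := by
      refine sum_congr rfl fun k hk => ?_
      have hk' := mem_Ico.1 hk
      rw [if_pos (by omega), if_neg (by omega), if_pos (by omega)]; noncomm_ring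
    rw [hfj, hfi, hmid, psum_min a (j + 2) (i + 1)]
    have hre : ∑ m ∈ Ico (j + 2) (i + 1), a (j + 2) m * psum a (m + 1) (i + 1)
        = ∑ k ∈ Ico (j + 1) i, a (j + 2) (k + 1) * psum a (k + 2) (i + 1) := by
      rw [Finset.sum_Ico_eq_sum_range, Finset.sum_Ico_eq_sum_range,
        (show i + 1 - (j + 2) = i - (j + 1) by omega)]
      refine sum_congr rfl fun r _ => ?_
      have e2 : j + 2 + r + 1 = j + 1 + r + 2 := by omega
      have e1 : j + 2 + r = j + 1 + r + 1 := by omega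
      rw [e2, e1]
    rw [hre, Finset.sum_neg_distrib]
    abel
  · rw [if_pos rfl]
    have h0 : ∀ b ∈ range n, b ≠ j →
        (if j < b then a (j + 2) (b + 1) else if j = b then (-1 : R) else 0) *
        (if b = j then (-1 : R) else if b < j then -psum a (b + 2) (j + 1) else 0) = 0 := by
      intro k _ hk
      split_ifs <;> first | (exfalso; omega) | noncomm_ring
    rw [Finset.sum_eq_single_of_mem j (mem_range.2 hj) h0, if_neg (lt_irrefl j),
      if_pos rfl, if_pos rfl]
    noncomm_ring
  · rw [if_neg (by omega)]
    refine Finset.sum_eq_zero fun k _ => ?_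
    split_ifs <;> first | (exfalso; omega) | noncomm_ring

lemma final_psum (a : ℕ → ℕ → R) (i : ℕ) :
    psum a 1 (i + 1) = a 1 (i + 1) + ∑ j ∈ range i, a 1 (j + 1) * psum a (j + 2) (i + 1) := by
  rw [psum_min, Finset.sum_Ico_eq_sum_range, (show i + 1 - 1 = i by omega)]
  congr 1
  refine sum_congr rfl fun r _ => ?_
  have e2 : 1 + r + 1 = r + 2 := by omega
  have e1 : 1 + r = r + 1 := by omega
  rw [e2, e1]

lemma final_sum (a : ℕ → ℕ → R) (n : ℕ) :
    a 1 (n + 1) - ∑ j ∈ range n, ∑ i ∈ range n,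
      a 1 (j + 1) * (if j = i then (-1 : R) else if j < i then -psum a (j + 2) (i + 1) else 0) *
        a (i + 2) (n + 1)
    = psum a 1 (n + 1) := by
  rw [Finset.sum_comm]
  have h : ∀ i ∈ range n, (∑ j ∈ range n,
      a 1 (j + 1) * (if j = i then (-1 : R) else if j < i then -psum a (j + 2) (i + 1) else 0) *
        a (i + 2) (n + 1)) = -(psum a 1 (i + 1) * a (i + 2) (n + 1)) := by
    intro i hi
    rw [mem_range] at hi
    have hsub : range (i + 1) ⊆ range n := range_subset_range.2 (by omega)
    have hz : ∀ k ∈ range n, k ∉ range (i + 1) →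
        a 1 (k + 1) * (if k = i then (-1 : R) else if k < i then -psum a (k + 2) (i + 1) else 0) *
        a (i + 2) (n + 1) = 0 := by
      intro k _ hk
      rw [mem_range] at hk
      rw [if_neg (by omega), if_neg (by omega)]; noncomm_ring
    rw [← Finset.sum_subset hsub hz, Finset.sum_range_succ, if_pos rfl,
      final_psum a i, add_mul, Finset.sum_mul, neg_add]
    have hmid : ∑ j ∈ range i,
        a 1 (j + 1) * (if j = i then (-1 : R) else if j < i then -psum a (j + 2) (i + 1) else 0) *
        a (i + 2) (n + 1)
        = ∑ j ∈ range i, -(a 1 (j + 1) * psum a (j + 2) (i + 1) * a (i + 2) (n + 1)) := by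
      refine sum_congr rfl fun k hk => ?_
      rw [mem_range] at hk
      rw [if_neg (by omega), if_pos (by omega)]; noncomm_ring
    rw [hmid, Finset.sum_neg_distrib,
      (show a 1 (i + 1) * (-1 : R) * a (i + 2) (n + 1) = -(a 1 (i + 1) * a (i + 2) (n + 1)) by
        noncomm_ring)]
    abel
  rw [Finset.sum_congr rfl h, Finset.sum_neg_distrib, psum_max a 1 (n + 1),
    Finset.sum_Ico_eq_sum_range, (show n + 1 - 1 = n by omega)]
  have h2 : ∑ r ∈ range n, psum a 1 (1 + r) * a (1 + r + 1) (n + 1)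
      = ∑ i ∈ range n, psum a 1 (i + 1) * a (i + 2) (n + 1) := by
    refine sum_congr rfl fun r _ => ?_
    have e2 : 1 + r + 1 = r + 2 := by omega
    have e1 : 1 + r = r + 1 := by omega
    rw [e2, e1]
  rw [h2, sub_neg_eq_add]
end Main

/-- The `(1,n)` quasideterminant of the almost upper-triangular
matrix (with `aᵢⱼ` for `i ≤ j`, `-1` on the subdiagonal, `0` below it) equals
`a₁ₙ + Σ_{1 ≤ j₁ < ⋯ < jₖ < n} a_{1j₁} a_{j₁+1,j₂} ⋯ a_{jₖ+1,n}`.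
(Here the matrix has size `n + 1` in Lean, i.e. `n + 1` plays the role of the
paper's `n`, with 1-based entries `a i j`.) -/
theorem quasideterminant_almost_triangular {R : Type*} [DivisionRing R] {n : ℕ}
    (a : ℕ → ℕ → R)
    (A : Matrix (Fin (n + 1)) (Fin (n + 1)) R)
    (hA : ∀ i j : Fin (n + 1),
      A i j = if (i : ℕ) ≤ (j : ℕ) then a ((i : ℕ) + 1) ((j : ℕ) + 1)
        else if (i : ℕ) = (j : ℕ) + 1 then -1 else 0)
    (N : Matrix (Fin n) (Fin n) R)
    (hN : A.submatrix (Fin.succAbove 0) (Fin.succAbove (Fin.last n)) * N = 1 ∧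
          N * A.submatrix (Fin.succAbove 0) (Fin.succAbove (Fin.last n)) = 1) :
    A 0 (Fin.last n) - ∑ j : Fin n, ∑ i : Fin n,
        A 0 ((Fin.last n).succAbove j) * N j i * A ((0 : Fin (n + 1)).succAbove i) (Fin.last n) =
      ∑ S ∈ (Finset.Ico 1 (n + 1)).powerset,
        chainProd a (n + 1) 1 (Finset.sort S (· ≤ ·)) := by
  set M := A.submatrix (Fin.succAbove 0) (Fin.succAbove (Fin.last n)) with hMdef
  set B : Matrix (Fin n) (Fin n) R := fun j i =>
    if (j : ℕ) = (i : ℕ) then -1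
    else if (j : ℕ) < (i : ℕ) then -psum a ((j : ℕ) + 2) ((i : ℕ) + 1) else 0 with hB
  have hMent : ∀ j k : Fin n, M j k =
      (if (j : ℕ) < (k : ℕ) then a ((j : ℕ) + 2) ((k : ℕ) + 1)
        else if (j : ℕ) = (k : ℕ) then (-1 : R) else 0) := by
    intro j k
    have h1 : M j k = A j.succ k.castSucc := by
      rw [hMdef, Matrix.submatrix_apply, Fin.succAbove_zero, Fin.succAbove_last]
    rw [h1, hA]
    simp only [Fin.val_succ, Fin.coe_castSucc]
    by_cases hlt : (j : ℕ) < (k : ℕ)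
    · rw [if_pos (by omega), if_pos hlt]
    · rw [if_neg (by omega)]
      by_cases heq : (j : ℕ) = (k : ℕ)
      · rw [if_pos (by omega), if_neg (by omega), if_pos heq]
      · rw [if_neg (by omega), if_neg (by omega), if_neg heq]
  have hMB : M * B = 1 := by
    ext j i
    rw [Matrix.mul_apply, Matrix.one_apply]
    have hcongr : ∀ k : Fin n, M j k * B k i =
        (if (j : ℕ) < (k : ℕ) then a ((j : ℕ) + 2) ((k : ℕ) + 1)
          else if (j : ℕ) = (k : ℕ) then (-1 : R) else 0) *
        (if (k : ℕ) = (i : ℕ) then (-1 : R)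
          else if (k : ℕ) < (i : ℕ) then -psum a ((k : ℕ) + 2) ((i : ℕ) + 1) else 0) := by
      intro k
      rw [hMent, hB]
    rw [Finset.sum_congr rfl fun k _ => hcongr k]
    rw [Fin.sum_univ_eq_sum_range (fun k =>
      (if (j : ℕ) < k then a ((j : ℕ) + 2) (k + 1)
        else if (j : ℕ) = k then (-1 : R) else 0) *
      (if k = (i : ℕ) then (-1 : R)
        else if k < (i : ℕ) then -psum a (k + 2) ((i : ℕ) + 1) else 0))]
    rw [key_sum a (j : ℕ) (i : ℕ) j.isLt i.isLt]
    by_cases h : j = i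
    · rw [if_pos (by rw [h]), if_pos h]
    · rw [if_neg (fun hc => h (Fin.ext hc)), if_neg h]
  have hNB : N = B := by
    calc N = N * (M * B) := by rw [hMB, Matrix.mul_one]
    _ = N * M * B := by rw [Matrix.mul_assoc]
    _ = B := by rw [hN.2, Matrix.one_mul]
  have hA0 : A 0 (Fin.last n) = a 1 (n + 1) := by
    rw [hA]
    simp [Fin.val_last]
  have hrow : ∀ j : Fin n, A 0 ((Fin.last n).succAbove j) = a 1 ((j : ℕ) + 1) := by
    intro j
    rw [Fin.succAbove_last, hA]
    simp
  have hcol : ∀ i : Fin n, A ((0 : Fin (n + 1)).succAbove i) (Fin.last n)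
      = a ((i : ℕ) + 2) (n + 1) := by
    intro i
    rw [Fin.succAbove_zero, hA]
    simp only [Fin.val_succ, Fin.val_last]
    rw [if_pos (by omega : (i : ℕ) + 1 ≤ n)]
  have hsum : (∑ j : Fin n, ∑ i : Fin n,
      A 0 ((Fin.last n).succAbove j) * N j i * A ((0 : Fin (n + 1)).succAbove i) (Fin.last n))
      = ∑ j ∈ Finset.range n, ∑ i ∈ Finset.range n,
        a 1 (j + 1) * (if j = i then (-1 : R) else if j < i then -psum a (j + 2) (i + 1) else 0) *
          a (i + 2) (n + 1) := by
    have hinner : ∀ j : Fin n, (∑ i : Fin n,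
        A 0 ((Fin.last n).succAbove j) * N j i * A ((0 : Fin (n + 1)).succAbove i) (Fin.last n))
        = ∑ i ∈ Finset.range n, a 1 ((j : ℕ) + 1) *
            (if (j : ℕ) = i then (-1 : R)
              else if (j : ℕ) < i then -psum a ((j : ℕ) + 2) (i + 1) else 0) *
          a (i + 2) (n + 1) := by
      intro j
      rw [← Fin.sum_univ_eq_sum_range (fun i => a 1 ((j : ℕ) + 1) *
        (if (j : ℕ) = i then (-1 : R)
          else if (j : ℕ) < i then -psum a ((j : ℕ) + 2) (i + 1) else 0) * a (i + 2) (n + 1))]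
      refine Finset.sum_congr rfl fun i _ => ?_
      rw [hrow, hcol, hNB, hB]
    rw [Finset.sum_congr rfl fun j (_ : j ∈ Finset.univ) => hinner j]
    rw [Fin.sum_univ_eq_sum_range (fun j => ∑ i ∈ Finset.range n, a 1 (j + 1) *
      (if j = i then (-1 : R) else if j < i then -psum a (j + 2) (i + 1) else 0) *
        a (i + 2) (n + 1))]
  rw [hA0, hsum, final_sum a n]
  rfl
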